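/- Let A and B be the 2×2 nilpotent Jordan blocks with a 1 in the (1,2) entry. Then the spectral norm of the Kronecker product B ⊗ A equals 1, while the supremum of |xy| over (x,y) ∈ W(A) × W(B) equals 1/4. Hence any constant K satisfying ‖f{A,B}‖₂ ≤ K·sup_{W(A)×W(B)}|f| for all bivariate polynomials f must satisfy K ≥ 4. -/

import Mathlib

open scoped Matrix Kronecker

/-- Spectral norm of a complex matrix. -/
noncomputable def specNorm {m n : Type*} [Fintype m] [Fintype n] [DecidableEq n]
    (M : Matrix m n ℂ) : ℝ :=
  ‖LinearMap.toContinuousLinearMap (Matrix.toEuclideanLin M)‖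

/-- The numerical range `W(A)` of a complex matrix. -/
def numRange {n : Type*} [Fintype n] (A : Matrix n n ℂ) : Set ℂ :=
  {z | ∃ v : n → ℂ, star v ⬝ᵥ v = 1 ∧ z = star v ⬝ᵥ A.mulVec v}

/-- Evaluation of a bivariate polynomial `p` at the commuting matrices
`I ⊗ A` and `B ⊗ I`, giving the bivariate matrix function `p{A,B}`. -/
noncomputable def bivPolyEval {m n : Type*} [Fintype m] [DecidableEq m] [Fintype n]
    [DecidableEq n] (p : MvPolynomial (Fin 2) ℂ) (A : Matrix m m ℂ) (B : Matrix n n ℂ) :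
    Matrix (n × m) (n × m) ℂ :=
  ∑ e ∈ p.support, p.coeff e • ((B ^ e 1) ⊗ₖ (A ^ e 0))

set_option synthInstance.maxHeartbeats 1000000 in
set_option maxHeartbeats 2000000 in
lemma specNorm_single_aux {ι : Type*} [Fintype ι] [DecidableEq ι] (i j : ι)
    (M : Matrix ι ι ℂ) (hM : ∀ v k, M.mulVec v k = if k = i then v j else 0) :
    specNorm M = 1 := by
  rw [specNorm]
  set T := LinearMap.toContinuousLinearMap (Matrix.toEuclideanLin M) with hT
  have hTapp : ∀ (x : EuclideanSpace ℂ ι) (k : ι), T x k = if k = i then x j else 0 := by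
    intro x k
    simp only [hT, LinearMap.coe_toContinuousLinearMap', Matrix.toEuclideanLin_apply]
    rw [PiLp.toLp_apply]
    exact hM _ k
  have hnorm : ∀ x : EuclideanSpace ℂ ι, ‖T x‖ = ‖x j‖ := by
    intro x
    rw [EuclideanSpace.norm_eq]
    have : ∀ k, ‖T x k‖ ^ 2 = if k = i then ‖x j‖^2 else 0 := by
      intro k; rw [hTapp]; split <;> simp
    rw [Finset.sum_congr rfl fun k _ => this k, Finset.sum_ite_eq' Finset.univ i,
      if_pos (Finset.mem_univ i)]
    exact Real.sqrt_sq (norm_nonneg _)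
  apply le_antisymm
  · apply ContinuousLinearMap.opNorm_le_bound _ zero_le_one
    intro x
    rw [hnorm, one_mul, EuclideanSpace.norm_eq]
    calc ‖x j‖ = Real.sqrt (‖x j‖^2) := (Real.sqrt_sq (norm_nonneg _)).symm
    _ ≤ _ := Real.sqrt_le_sqrt (Finset.single_le_sum (f := fun k => ‖x k‖^2)
        (fun k _ => sq_nonneg _) (Finset.mem_univ j))
  · have h1 : ‖(EuclideanSpace.single j (1:ℂ) : EuclideanSpace ℂ ι)‖ = 1 := by
      simp [EuclideanSpace.norm_single]
    have h2 := T.le_opNorm (EuclideanSpace.single j (1:ℂ))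
    rw [hnorm, h1, mul_one] at h2
    simpa using h2

lemma half_mem_aux : (1/2 : ℂ) ∈ numRange ![![0, 1], ![0, 0]] := by
  refine ⟨![(Real.sqrt 2)⁻¹, (Real.sqrt 2)⁻¹], ?_, ?_⟩ <;>
  · have h2 : (Real.sqrt 2) ^ 2 = 2 := Real.sq_sqrt (by norm_num)
    have h0 : (Real.sqrt 2 : ℝ) ≠ 0 := by positivity
    simp [dotProduct, Fin.sum_univ_two, Matrix.mulVec, ← Complex.ofReal_inv,
      ← Complex.ofReal_mul, ← mul_inv]
    push_cast
    ring

lemma abs_le_half_aux {z : ℂ} (hz : z ∈ numRange ![![0, 1], ![0, 0]]) :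
    ‖z‖ ≤ 1/2 := by
  obtain ⟨v, hv1, hv2⟩ := hz
  have hval : z = (starRingEnd ℂ) (v 0) * v 1 := by
    simp [hv2, dotProduct, Fin.sum_univ_two, Matrix.mulVec]
  have hsum : Complex.normSq (v 0) + Complex.normSq (v 1) = 1 := by
    have : ((Complex.normSq (v 0) + Complex.normSq (v 1) : ℝ) : ℂ) = 1 := by
      push_cast
      rw [← Complex.mul_conj, ← Complex.mul_conj] at *
      simpa [dotProduct, Fin.sum_univ_two, mul_comm] using hv1
    exact_mod_cast this
  have h0 := Complex.normSq_nonneg (v 0)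
  have h1 := Complex.normSq_nonneg (v 1)
  rw [hval, norm_mul]
  have e0 : ‖(starRingEnd ℂ) (v 0)‖ = Real.sqrt (Complex.normSq (v 0)) := by
    rw [Complex.norm_conj]; exact Complex.norm_def _
  have e1 : ‖v 1‖ = Real.sqrt (Complex.normSq (v 1)) := Complex.norm_def _
  rw [e0, e1, ← Real.sqrt_mul h0]
  rw [show (1/2 : ℝ) = Real.sqrt (1/4) by
    rw [show (1/4:ℝ) = (1/2)^2 by norm_num, Real.sqrt_sq]; norm_num]
  apply Real.sqrt_le_sqrt
  nlinarith [sq_nonneg (Complex.normSq (v 0) - Complex.normSq (v 1))]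

lemma bivPolyEval_XX {m n : Type*} [Fintype m] [DecidableEq m] [Fintype n] [DecidableEq n]
    (A : Matrix m m ℂ) (B : Matrix n n ℂ) :
    bivPolyEval (MvPolynomial.X 0 * MvPolynomial.X 1) A B = B ⊗ₖ A := by
  have h : (MvPolynomial.X 0 * MvPolynomial.X 1 : MvPolynomial (Fin 2) ℂ)
      = MvPolynomial.monomial (Finsupp.single 0 1 + Finsupp.single 1 1) 1 := by
    rw [MvPolynomial.X, MvPolynomial.X, MvPolynomial.monomial_mul, one_mul]
  rw [bivPolyEval, h, MvPolynomial.support_monomial, if_neg one_ne_zero]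
  simp [MvPolynomial.coeff_monomial, Finsupp.single_apply]

/-- For the 2×2 nilpotent Jordan blocks `A = B`, the spectral norm of `B ⊗ A` is `1`
while the supremum of `|xy|` over `W(A) × W(B)` is `1/4`; consequently any constant `K`
with `‖p{A,B}‖₂ ≤ K · sup_{W(A)×W(B)} |p|` for all bivariate polynomials `p`
satisfies `K ≥ 4`. -/
theorem kronecker_jordan_lower_bound
    (A B : Matrix (Fin 2) (Fin 2) ℂ) (hA : A = ![![0, 1], ![0, 0]])
    (hB : B = ![![0, 1], ![0, 0]]) :
    specNorm (B ⊗ₖ A) = 1 ∧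
    sSup {r : ℝ | ∃ x ∈ numRange A, ∃ y ∈ numRange B, r = ‖x * y‖} = 1 / 4 ∧
    ∀ K : ℝ,
      (∀ p : MvPolynomial (Fin 2) ℂ,
        specNorm (bivPolyEval p A B) ≤
          K * sSup {r : ℝ | ∃ x ∈ numRange A, ∃ y ∈ numRange B,
            r = ‖MvPolynomial.eval ![x, y] p‖}) →
      4 ≤ K := by
  subst hA hB
  have hmul : ∀ (v : Fin 2 × Fin 2 → ℂ) (k : Fin 2 × Fin 2),
      ((![![0,1],![0,0]] : Matrix (Fin 2) (Fin 2) ℂ) ⊗ₖ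
        (![![0,1],![0,0]] : Matrix (Fin 2) (Fin 2) ℂ)).mulVec v k
        = if k = ((0,0) : Fin 2 × Fin 2) then v (1,1) else 0 := by
    rintro v ⟨k1, k2⟩
    fin_cases k1 <;> fin_cases k2 <;>
      simp [Matrix.mulVec, dotProduct, Fintype.sum_prod_type, Fin.sum_univ_two,
        Matrix.kroneckerMap, Prod.ext_iff]
  have hspec : specNorm ((![![0,1],![0,0]] : Matrix (Fin 2) (Fin 2) ℂ) ⊗ₖ
      (![![0,1],![0,0]] : Matrix (Fin 2) (Fin 2) ℂ)) = 1 :=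
    specNorm_single_aux ((0,0) : Fin 2 × Fin 2) ((1,1) : Fin 2 × Fin 2) _ hmul
  have habs : ‖(1/2 : ℂ) * (1/2 : ℂ)‖ = 1/4 := by
    rw [show ((1/2:ℂ) * (1/2:ℂ)) = ((1/4 : ℝ) : ℂ) by norm_num, Complex.norm_real]
    norm_num
  have hgreat : IsGreatest {r : ℝ | ∃ x ∈ numRange (![![0,1],![0,0]] : Matrix (Fin 2) (Fin 2) ℂ),
      ∃ y ∈ numRange (![![0,1],![0,0]] : Matrix (Fin 2) (Fin 2) ℂ),
      r = ‖x * y‖} (1/4) := by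
    constructor
    · exact ⟨1/2, half_mem_aux, 1/2, half_mem_aux, habs.symm⟩
    · rintro r ⟨x, hx, y, hy, rfl⟩
      rw [norm_mul]
      have hx' := abs_le_half_aux hx
      have hy' := abs_le_half_aux hy
      calc ‖x‖ * ‖y‖ ≤ (1/2) * (1/2) :=
        mul_le_mul hx' hy' (norm_nonneg _) (by norm_num)
      _ = 1/4 := by norm_num
  have hsup := hgreat.csSup_eq
  refine ⟨hspec, hsup, ?_⟩
  intro K hK
  have h := hK (MvPolynomial.X 0 * MvPolynomial.X 1)
  erw [bivPolyEval_XX, hspec] at h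
  have hsets : {r : ℝ | ∃ x ∈ numRange (![![0,1],![0,0]] : Matrix (Fin 2) (Fin 2) ℂ),
      ∃ y ∈ numRange (![![0,1],![0,0]] : Matrix (Fin 2) (Fin 2) ℂ),
      r = ‖MvPolynomial.eval ![x, y]
        (MvPolynomial.X 0 * MvPolynomial.X 1 : MvPolynomial (Fin 2) ℂ)‖}
      = {r : ℝ | ∃ x ∈ numRange (![![0,1],![0,0]] : Matrix (Fin 2) (Fin 2) ℂ),
      ∃ y ∈ numRange (![![0,1],![0,0]] : Matrix (Fin 2) (Fin 2) ℂ),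
      r = ‖x * y‖} := by
    ext r
    simp
  erw [hsets, hsup] at h
  linarith
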